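/- Let s, t ∈ ℝ and define K(z,w) := exp(is(z−w))/(z−w) for real z ≠ w. Then for all real z ≠ w one has the kernel commutation identity (z−t)·∂K/∂z(z,w) − i·s·z·K(z,w) = −∂/∂w[ (w−t)·K(z,w) ] − i·s·w·K(z,w). -/

import Mathlib

open Complex

lemma hasDerivAt_ofReal' (x : ℝ) : HasDerivAt (fun y : ℝ => (y : ℂ)) 1 x := by
  exact Complex.ofRealCLM.hasDerivAt (x := x)

/-- Kernel-level commutation identity for the (principal-value) kernel
`K(z,w) = e^{is(z−w)}/(z−w)` of the semi-infinite time-band limited Fourier operator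
associated to `ψ(x,z) = exp(−xz)`: the kernel satisfies
`(z−t)∂_z K − iszK = −∂_w[(w−t)K] − iswK`, the kernel form of commutation with
`R(z,∂_z) = (z−t)∂_z − isz`. -/
theorem kernel_commutation_fourier (s t : ℝ) :
    let K : ℝ → ℝ → ℂ := fun z w =>
      Complex.exp (Complex.I * (s : ℂ) * ((z : ℂ) - (w : ℂ))) / ((z : ℂ) - (w : ℂ))
    ∀ z w : ℝ, z ≠ w →
      ((z : ℂ) - (t : ℂ)) * deriv (fun z' => K z' w) z -
          Complex.I * (s : ℂ) * (z : ℂ) * K z w =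
        -(deriv (fun w' : ℝ => ((w' : ℂ) - (t : ℂ)) * K z w') w) -
          Complex.I * (s : ℂ) * (w : ℂ) * K z w := by
  intro K z w hzw
  have hne : (z : ℂ) - (w : ℂ) ≠ 0 := sub_ne_zero.mpr (by exact_mod_cast hzw)
  simp only [K]
  set E : ℂ := Complex.exp (Complex.I * (s : ℂ) * ((z : ℂ) - (w : ℂ))) with hE
  -- derivative in z
  have h1 : HasDerivAt (fun z' : ℝ => ((z' : ℂ) - (w : ℂ))) 1 z := by
    simpa using (hasDerivAt_ofReal' z).sub_const (w : ℂ)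
  have hexp1 : HasDerivAt (fun z' : ℝ =>
      Complex.exp (Complex.I * (s : ℂ) * ((z' : ℂ) - (w : ℂ))))
      (Complex.I * (s : ℂ) * E) z := by
    simpa [hE, mul_comm, mul_assoc] using ((h1.const_mul (Complex.I * (s : ℂ))).cexp)
  have hdz : HasDerivAt (fun z' : ℝ => K z' w)
      ((Complex.I * (s : ℂ) * E * ((z : ℂ) - (w : ℂ)) - E * 1) /
        ((z : ℂ) - (w : ℂ)) ^ 2) z := hexp1.div h1 hne
  -- derivative in w
  have h2 : HasDerivAt (fun w' : ℝ => ((z : ℂ) - (w' : ℂ))) (-1) w := by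
    simpa using (hasDerivAt_ofReal' w).const_sub ((z : ℂ))
  have hexp2 : HasDerivAt (fun w' : ℝ =>
      Complex.exp (Complex.I * (s : ℂ) * ((z : ℂ) - (w' : ℂ))))
      (Complex.I * (s : ℂ) * (-1) * E) w := by
    simpa [hE, mul_comm, mul_assoc] using ((h2.const_mul (Complex.I * (s : ℂ))).cexp)
  have hK2 : HasDerivAt (fun w' : ℝ => K z w')
      ((Complex.I * (s : ℂ) * (-1) * E * ((z : ℂ) - (w : ℂ)) - E * (-1)) /
        ((z : ℂ) - (w : ℂ)) ^ 2) w := hexp2.div h2 hne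
  have hlin : HasDerivAt (fun w' : ℝ => ((w' : ℂ) - (t : ℂ))) 1 w := by
    simpa using (hasDerivAt_ofReal' w).sub_const (t : ℂ)
  have hdw : HasDerivAt (fun w' : ℝ => ((w' : ℂ) - (t : ℂ)) * K z w')
      (1 * K z w + ((w : ℂ) - (t : ℂ)) *
        ((Complex.I * (s : ℂ) * (-1) * E * ((z : ℂ) - (w : ℂ)) - E * (-1)) /
          ((z : ℂ) - (w : ℂ)) ^ 2)) w := hlin.mul hK2
  rw [hdz.deriv, hdw.deriv]
  simp only [K, ← hE]
  clear_value E
  field_simp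
  ring
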